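/- Under the operator setup below, with a square root p of q and α satisfying the same hypothesis as in the determination of the set N (either α = 0, or α ≠ 0 and α²(q−q⁻¹)² ≠ −(p^j + p^{−j})² for all integers j ≥ 0), suppose λ = ε·q^{−l} belongs to N, where ε ∈ {1, −1} and l ∈ ℕ₀ and N = {λ ≠ 0 : φ^m(ψ(0,λ)) = 0 for some m ≥ 1}. Then: φ'(ψ(0,λ)) = 0; φ^{l+1}(ψ(0,λ)) = 0 and φ^{l}(ψ(0,λ)) ≠ 0; the subspace V_λ = span{φ^{j}(ψ(0,λ)) : 0 ≤ j ≤ l} has dimension l+1 and is invariant under φ, φ' and κ; and V_λ is simple, i.e. the only subspaces of V_λ invariant under all of φ, φ' and κ are 0 and V_λ. -/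

import Mathlib

noncomputable section

/-- The vector space with basis `ψ(l,λ)`, `l ∈ ℕ₀`, `λ ∈ ℂ∖{0}`. -/
abbrev Wsp : Type := (ℕ × ℂˣ) →₀ ℂ

/-- The basis vector `ψ(l,λ)`. -/
def psi (l : ℕ) (u : ℂˣ) : Wsp := Finsupp.single (l, u) 1

/-- The q-number `[l] = (q^l − q^(−l))/(q − q⁻¹)`. -/
def qnum (q : ℂˣ) (l : ℕ) : ℂ := ((q : ℂ) ^ l - (q : ℂ)⁻¹ ^ l) / ((q : ℂ) - (q : ℂ)⁻¹)

/-- `φ(ψ(l,λ)) = −(q^l[l]/(q−q⁻¹))·ψ(l−1, q²λ) + αq(q^(2l) − λ)·ψ(l, q²λ)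
  + q²(q^(2l) − λ²)·ψ(l+1, q²λ)` (the `ψ(l−1,·)` term has coefficient `[0] = 0` for `l = 0`). -/
def phi (q : ℂˣ) (α : ℂ) : Wsp →ₗ[ℂ] Wsp :=
  Finsupp.lsum ℂ fun i => LinearMap.toSpanSingleton ℂ Wsp
    ((-((q : ℂ) ^ i.1 * qnum q i.1 / ((q : ℂ) - (q : ℂ)⁻¹))) • psi (i.1 - 1) (q ^ 2 * i.2) +
     (α * (q : ℂ) * ((q : ℂ) ^ (2 * i.1) - (i.2 : ℂ))) • psi i.1 (q ^ 2 * i.2) +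
     ((q : ℂ) ^ 2 * ((q : ℂ) ^ (2 * i.1) - (i.2 : ℂ) ^ 2)) • psi (i.1 + 1) (q ^ 2 * i.2))

/-- `φ'(ψ(l,λ)) = λ⁻¹·(q^(1−l)[l]/(q−q⁻¹))·ψ(l−1, q⁻²λ)`. -/
def phi' (q : ℂˣ) : Wsp →ₗ[ℂ] Wsp :=
  Finsupp.lsum ℂ fun i => LinearMap.toSpanSingleton ℂ Wsp
    ((((i.2 : ℂ))⁻¹ * ((q : ℂ) ^ ((1 : ℤ) - (i.1 : ℤ)) * qnum q i.1 / ((q : ℂ) - (q : ℂ)⁻¹))) •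
      psi (i.1 - 1) ((q ^ 2)⁻¹ * i.2))

/-- `κ(ψ(l,λ)) = λ·ψ(l,λ)`. -/
def kappa : Wsp →ₗ[ℂ] Wsp :=
  Finsupp.lsum ℂ fun i => LinearMap.toSpanSingleton ℂ Wsp (((i.2 : ℂ)) • psi i.1 i.2)

/-- `κ⁻¹(ψ(l,λ)) = λ⁻¹·ψ(l,λ)`. -/
def kappaInv : Wsp →ₗ[ℂ] Wsp :=
  Finsupp.lsum ℂ fun i => LinearMap.toSpanSingleton ℂ Wsp (((i.2 : ℂ))⁻¹ • psi i.1 i.2)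


set_option maxHeartbeats 2000000
namespace S16
lemma qnum_zero (q : ℂˣ) : qnum q 0 = 0 := by simp [qnum]
lemma phi_psi (q : ℂˣ) (α : ℂ) (n : ℕ) (lam : ℂˣ) :
    phi q α (psi n lam) =
      (-((q : ℂ) ^ n * qnum q n / ((q : ℂ) - (q : ℂ)⁻¹))) • psi (n - 1) (q ^ 2 * lam) +
      (α * (q : ℂ) * ((q : ℂ) ^ (2 * n) - (lam : ℂ))) • psi n (q ^ 2 * lam) +
      ((q : ℂ) ^ 2 * ((q : ℂ) ^ (2 * n) - (lam : ℂ) ^ 2)) • psi (n + 1) (q ^ 2 * lam) := by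
  rw [phi, psi, Finsupp.lsum_single, LinearMap.toSpanSingleton_apply, one_smul]
lemma phi'_psi (q : ℂˣ) (n : ℕ) (lam : ℂˣ) :
    phi' q (psi n lam) =
      (((lam : ℂ))⁻¹ * ((q : ℂ) ^ ((1 : ℤ) - (n : ℤ)) * qnum q n / ((q : ℂ) - (q : ℂ)⁻¹))) •
        psi (n - 1) ((q ^ 2)⁻¹ * lam) := by
  rw [phi', psi, Finsupp.lsum_single, LinearMap.toSpanSingleton_apply, one_smul]
lemma kappa_psi (n : ℕ) (lam : ℂˣ) : kappa (psi n lam) = ((lam : ℂ)) • psi n lam := by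
  rw [kappa, psi, Finsupp.lsum_single, LinearMap.toSpanSingleton_apply, one_smul]; rfl
lemma kappaInv_psi (n : ℕ) (lam : ℂˣ) : kappaInv (psi n lam) = ((lam : ℂ))⁻¹ • psi n lam := by
  rw [kappaInv, psi, Finsupp.lsum_single, LinearMap.toSpanSingleton_apply, one_smul]; rfl
lemma phi'_psi_zero (q : ℂˣ) (lam : ℂˣ) : phi' q (psi 0 lam) = 0 := by
  rw [phi'_psi, qnum_zero]; simp

variable {q : ℂˣ} (hq' : ∀ k : ℕ, 0 < k → (q : ℂ) ^ k ≠ 1)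

lemma hw (hq' : ∀ k : ℕ, 0 < k → (q : ℂ) ^ k ≠ 1) : (q : ℂ) - (q : ℂ)⁻¹ ≠ 0 := by
  intro h
  apply hq' 2 (by norm_num)
  have h1 : (q : ℂ) = (q : ℂ)⁻¹ := sub_eq_zero.mp h
  have : (q : ℂ) ^ 2 = (q : ℂ) * (q : ℂ)⁻¹ := by rw [sq]; rw [← h1]
  rw [this, mul_inv_cancel₀ q.ne_zero]

lemma comm_psi (hq' : ∀ k : ℕ, 0 < k → (q : ℂ) ^ k ≠ 1) (α : ℂ) (n : ℕ) (lam : ℂˣ) :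
    phi' q (phi q α (psi n lam)) = phi q α (phi' q (psi n lam)) +
      ((q : ℂ) - (q : ℂ)⁻¹)⁻¹ • (kappaInv (psi n lam) - kappa (psi n lam)) := by
  have hQ : (q : ℂ) ≠ 0 := q.ne_zero
  have hl : (lam : ℂ) ≠ 0 := lam.ne_zero
  have hww := hw hq'
  cases n with
  | zero =>
    simp only [phi_psi, phi'_psi, kappa_psi, kappaInv_psi, map_add, map_smul, smul_smul,
      qnum_zero, Nat.zero_sub, Nat.add_sub_cancel, inv_mul_cancel_left, mul_inv_cancel_left,
      smul_sub]
    match_scalars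
    all_goals
      simp only [qnum, zpow_sub₀ hQ, zpow_add₀ hQ, zpow_one, zpow_natCast, zpow_zero,
        pow_zero, pow_one, Nat.cast_zero, Nat.cast_add, Nat.cast_one, mul_zero, zero_mul,
        zero_div, mul_one, one_mul, neg_zero, zero_add, add_zero, div_eq_mul_inv, pow_two,
        mul_inv, inv_pow, inv_inv]
    all_goals try (
      generalize hW : ((q:ℂ) - (q:ℂ)⁻¹)⁻¹ = W
      generalize hR : ((q:ℂ))⁻¹ = R
      generalize hL : ((lam:ℂ))⁻¹ = L
      have r1 : (q:ℂ) * R = 1 := by rw [← hR]; exact mul_inv_cancel₀ hQ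
      have r2 : (lam:ℂ) * L = 1 := by rw [← hL]; exact mul_inv_cancel₀ hl
      have r4 : ((q:ℂ) - R) * W = 1 := by rw [← hR, ← hW]; exact mul_inv_cancel₀ hww
      linear_combination ((q:ℂ)*(q:ℂ)*(1-(lam:ℂ)*(lam:ℂ))*R*R*L*(q:ℂ)*R*W) * r4 + (W*(-1*(lam:ℂ) + L - 1*(q:ℂ)*R*(lam:ℂ) + (q:ℂ)*R*L + (q:ℂ)^2*R^2*L - 1*(q:ℂ)^2*R^2*L*(lam:ℂ)^2)) * r1 + (W*(-1*(q:ℂ)^2*R^2*(lam:ℂ))) * r2)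
  | succ m =>
    simp only [phi_psi, phi'_psi, kappa_psi, kappaInv_psi, map_add, map_smul, smul_smul,
      Nat.add_sub_cancel, inv_mul_cancel_left, mul_inv_cancel_left, smul_sub]
    match_scalars
    case _ =>
      try rw [show 2*(m+1) = m*2+2 by ring]
      try rw [show 2*m = m*2 by ring]
      simp only [qnum, zpow_sub₀ hQ, zpow_add₀ hQ, zpow_one, zpow_natCast, zpow_zero,
        pow_zero, pow_one, pow_add, pow_mul, pow_succ, Nat.cast_zero, Nat.cast_add,
        Nat.cast_one, mul_zero, zero_mul, zero_div, mul_one, one_mul, neg_zero, zero_add,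
        add_zero, div_eq_mul_inv, pow_two, mul_inv, inv_pow, inv_inv]
      generalize hW : ((q:ℂ) - (q:ℂ)⁻¹)⁻¹ = W
      generalize hY : (((q:ℂ))^m)⁻¹ = Y
      generalize hX : ((q:ℂ))^m = X
      generalize hR : ((q:ℂ))⁻¹ = R
      generalize hL : ((lam:ℂ))⁻¹ = L
      have r1 : (q:ℂ) * R = 1 := by rw [← hR]; exact mul_inv_cancel₀ hQ
      have r2 : (lam:ℂ) * L = 1 := by rw [← hL]; exact mul_inv_cancel₀ hl
      have r3 : X * Y = 1 := by rw [← hX, ← hY]; exact mul_inv_cancel₀ (pow_ne_zero _ hQ)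
      have r4 : ((q:ℂ) - R) * W = 1 := by rw [← hR, ← hW]; exact mul_inv_cancel₀ hww
      linear_combination (W^4*(-1*R*L*Y^2 + R*L*X*Y + R*L*X*Y^3 - 1*R*L*X^2*Y^2 + (q:ℂ)*L*X*Y - 1*(q:ℂ)*L*X^2 - 1*(q:ℂ)*L*X^2*Y^2 + (q:ℂ)*L*X^3*Y - 1*(q:ℂ)*R^2*L*X*Y^3 + (q:ℂ)*R^2*L*X^2*Y^2 + (q:ℂ)^2*R*L*X^2*Y^2 - 1*(q:ℂ)^2*R*L*X^3*Y)) * r1 + (W^4*(R*L*Y^2 - 1*R*L*X*Y - 1*(q:ℂ)*L*X*Y + (q:ℂ)*L*X^2 - 1*(q:ℂ)*R^2*L*Y^2 + (q:ℂ)*R^2*L*X*Y + (q:ℂ)^2*R*L*X*Y - 1*(q:ℂ)^2*R*L*X^2)) * r3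
    case _ =>
      try rw [show 2*(m+1) = m*2+2 by ring]
      try rw [show 2*m = m*2 by ring]
      simp only [qnum, zpow_sub₀ hQ, zpow_add₀ hQ, zpow_one, zpow_natCast, zpow_zero,
        pow_zero, pow_one, pow_add, pow_mul, pow_succ, Nat.cast_zero, Nat.cast_add,
        Nat.cast_one, mul_zero, zero_mul, zero_div, mul_one, one_mul, neg_zero, zero_add,
        add_zero, div_eq_mul_inv, pow_two, mul_inv, inv_pow, inv_inv]
      generalize hW : ((q:ℂ) - (q:ℂ)⁻¹)⁻¹ = W
      generalize hY : (((q:ℂ))^m)⁻¹ = Y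
      generalize hX : ((q:ℂ))^m = X
      generalize hR : ((q:ℂ))⁻¹ = R
      generalize hL : ((lam:ℂ))⁻¹ = L
      have r1 : (q:ℂ) * R = 1 := by rw [← hR]; exact mul_inv_cancel₀ hQ
      have r2 : (lam:ℂ) * L = 1 := by rw [← hL]; exact mul_inv_cancel₀ hl
      have r3 : X * Y = 1 := by rw [← hX, ← hY]; exact mul_inv_cancel₀ (pow_ne_zero _ hQ)
      have r4 : ((q:ℂ) - R) * W = 1 := by rw [← hR, ← hW]; exact mul_inv_cancel₀ hww
      linear_combination (W^2*(-1*L*α + L*X*Y*α - 1*(q:ℂ)*R*L*α + (q:ℂ)*R*L*X^2*Y^2*α + (q:ℂ)^2*L*X^2*α - 1*(q:ℂ)^2*L*X^3*Y*α - 1*(q:ℂ)^2*R^2*L*X*Y*α + (q:ℂ)^3*R*L*X^2*α - 1*(q:ℂ)^3*R^3*L*X^2*Y^2*α + (q:ℂ)^4*R^2*L*X^3*Y*α)) * r1 + (W^2*(L*α + (q:ℂ)*R*L*X*Y*α - 1*(q:ℂ)^2*L*X^2*α - 1*(q:ℂ)^2*R^2*L*α - 1*(q:ℂ)^3*R^3*L*X*Y*α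 + (q:ℂ)^4*R^2*L*X^2*α)) * r3
    case _ =>
      try rw [show 2*(m+1) = m*2+2 by ring]
      try rw [show 2*m = m*2 by ring]
      simp only [qnum, zpow_sub₀ hQ, zpow_add₀ hQ, zpow_one, zpow_natCast, zpow_zero,
        pow_zero, pow_one, pow_add, pow_mul, pow_succ, Nat.cast_zero, Nat.cast_add,
        Nat.cast_one, mul_zero, zero_mul, zero_div, mul_one, one_mul, neg_zero, zero_add,
        add_zero, div_eq_mul_inv, pow_two, mul_inv, inv_pow, inv_inv]
      generalize hW : ((q:ℂ) - (q:ℂ)⁻¹)⁻¹ = W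
      generalize hY : (((q:ℂ))^m)⁻¹ = Y
      generalize hX : ((q:ℂ))^m = X
      generalize hR : ((q:ℂ))⁻¹ = R
      generalize hL : ((lam:ℂ))⁻¹ = L
      have r1 : (q:ℂ) * R = 1 := by rw [← hR]; exact mul_inv_cancel₀ hQ
      have r2 : (lam:ℂ) * L = 1 := by rw [← hL]; exact mul_inv_cancel₀ hl
      have r3 : X * Y = 1 := by rw [← hX, ← hY]; exact mul_inv_cancel₀ (pow_ne_zero _ hQ)
      have r4 : ((q:ℂ) - R) * W = 1 := by rw [← hR, ← hW]; exact mul_inv_cancel₀ hww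
      linear_combination ((L-(lam:ℂ))*W) * r4 + (W^2*(R*(lam:ℂ) - 1*R*L - 1*(q:ℂ)*(lam:ℂ) + (q:ℂ)*L*X*Y + (q:ℂ)*R^2*(lam:ℂ) - 1*(q:ℂ)*R^2*L - 1*(q:ℂ)^2*R*(lam:ℂ) + (q:ℂ)^2*R*L*X^2*Y^2 + (q:ℂ)^2*R^3*(lam:ℂ) - 1*(q:ℂ)^2*R^3*L + (q:ℂ)^3*L*X^2 - 1*(q:ℂ)^3*L*X^3*Y - 1*(q:ℂ)^3*R^2*(lam:ℂ) - 1*(q:ℂ)^3*R^4*L*X*Y + (q:ℂ)^3*R^4*L*(lam:ℂ)^2*X*Y + (q:ℂ)^4*R*L*X^2 - 1*(q:ℂ)^4*R^3*L*(lam:ℂ)^2*X*Y - 1*(q:ℂ)^4*R^5*L*X^2*Y^2 + (q:ℂ)^5*R^2*L*X^2 + (q:ℂ)^6*R^3*L*X^3*Y)) * r1 + (W^2*((q:ℂ)^3*R^4*(lam:ℂ)*X*Y - 1*(q:ℂ)^4*R^3*(lam:ℂ)*X*Y)) * r2 + (W^2*((q:ℂ)*L + (q:ℂ)^2*R*L*X*Y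 - 1*(q:ℂ)^3*L*X^2 + (q:ℂ)^3*R^4*(lam:ℂ) - 1*(q:ℂ)^3*R^4*L - 1*(q:ℂ)^4*R^3*(lam:ℂ) - 1*(q:ℂ)^4*R^5*L*X*Y + (q:ℂ)^6*R^3*L*X^2)) * r3

lemma comm_apply (hq' : ∀ k : ℕ, 0 < k → (q : ℂ) ^ k ≠ 1) (α : ℂ) (x : Wsp) :
    phi' q (phi q α x) = phi q α (phi' q x) +
      ((q : ℂ) - (q : ℂ)⁻¹)⁻¹ • (kappaInv x - kappa x) := by
  induction x using Finsupp.induction_linear with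
  | zero => simp
  | add f g hf hg =>
    simp only [map_add, hf, hg, smul_sub, smul_add]
    module
  | single a b =>
    have h : (Finsupp.single a b : Wsp) = b • psi a.1 a.2 := by
      simp [psi, Finsupp.smul_single]
    rw [h]
    simp only [map_smul, comm_psi hq', smul_add, smul_sub]
    module

section main
variable (q : ℂˣ) (α : ℂ) (u : ℂˣ)

/-- second-index units -/
def mu (j : ℕ) : ℂˣ := (q ^ 2) ^ j * u

lemma mu_succ (j : ℕ) : q ^ 2 * mu q u j = mu q u (j + 1) := by
  rw [mu, mu, pow_succ (q ^ 2) j, mul_comm ((q ^ 2) ^ j) (q ^ 2), mul_assoc]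

lemma mu_zero : mu q u 0 = u := by rw [mu, pow_zero, one_mul]

def Ac (i : ℕ) : ℂ := -((q : ℂ) ^ i * qnum q i / ((q : ℂ) - (q : ℂ)⁻¹))
def Bc (i : ℕ) (m : ℂˣ) : ℂ := α * (q : ℂ) * ((q : ℂ) ^ (2 * i) - (m : ℂ))
def Cc (i : ℕ) (m : ℂˣ) : ℂ := (q : ℂ) ^ 2 * ((q : ℂ) ^ (2 * i) - (m : ℂ) ^ 2)

lemma phi_psi' (i : ℕ) (m : ℂˣ) :
    phi q α (psi i m) = Ac q i • psi (i - 1) (q ^ 2 * m) + Bc q α i m • psi i (q ^ 2 * m) +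
      Cc q i m • psi (i + 1) (q ^ 2 * m) := phi_psi q α i m

lemma Ac_zero : Ac q 0 = 0 := by simp [Ac, qnum_zero]

/-- coefficients of `φ^j ψ(0,u)` -/
def c : ℕ → ℕ → ℂ
  | 0, i => if i = 0 then 1 else 0
  | j+1, i => Ac q (i + 1) * c j (i + 1) + Bc q α i (mu q u j) * c j i +
      (if i = 0 then 0 else Cc q (i - 1) (mu q u j) * c j (i - 1))

lemma c_zero_eq (i : ℕ) : c q α u 0 i = if i = 0 then 1 else 0 := by rw [c]

lemma c_succ (j i : ℕ) : c q α u (j+1) i =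
    Ac q (i + 1) * c q α u j (i + 1) + Bc q α i (mu q u j) * c q α u j i +
      (if i = 0 then 0 else Cc q (i - 1) (mu q u j) * c q α u j (i - 1)) := by rw [c]

lemma c_of_gt : ∀ j i, j < i → c q α u j i = 0 := by
  intro j
  induction j with
  | zero => intro i hi; rw [c_zero_eq, if_neg (by omega)]
  | succ j ih =>
    intro i hi
    rw [c_succ, ih (i+1) (by omega), ih i (by omega), mul_zero, mul_zero]
    rcases Nat.eq_zero_or_pos i with h0 | h0
    · omega
    · rw [if_neg (by omega), ih (i-1) (by omega), mul_zero, add_zero, add_zero]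

/-- `v j = φ^j ψ(0,u)` -/
def v (j : ℕ) : Wsp := ((phi q α : Module.End ℂ Wsp) ^ j) (psi 0 u)

lemma v_zero : v q α u 0 = psi 0 u := rfl

lemma v_succ (j : ℕ) : v q α u (j + 1) = phi q α (v q α u j) := by
  rw [v, v, pow_succ', Module.End.mul_apply]

lemma v_eq (j : ℕ) :
    v q α u j = ∑ i ∈ Finset.range (j + 1), c q α u j i • psi i (mu q u j) := by
  induction j with
  | zero =>
    rw [v_zero, mu_zero]
    simp [c_zero_eq]
  | succ j ih =>
    rw [v_succ, ih, map_sum]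
    simp only [map_smul, phi_psi', mu_succ, smul_add, smul_smul]
    rw [Finset.sum_add_distrib, Finset.sum_add_distrib]
    have e1 : ∑ i ∈ Finset.range (j + 1), (c q α u j i * Ac q i) • psi (i - 1) (mu q u (j+1)) =
        ∑ i ∈ Finset.range (j + 2), (Ac q (i+1) * c q α u j (i+1)) • psi i (mu q u (j+1)) := by
      rw [Finset.sum_range_succ', Finset.sum_range_succ, Finset.sum_range_succ]
      rw [c_of_gt q α u j (j+1) (by omega), c_of_gt q α u j (j+2) (by omega)]
      simp only [Ac_zero, mul_zero, zero_mul, zero_smul, add_zero, Nat.add_sub_cancel]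
      exact Finset.sum_congr rfl fun i _ => by rw [mul_comm]
    have e2 : ∑ i ∈ Finset.range (j + 1), (c q α u j i * Bc q α i (mu q u j)) •
          psi i (mu q u (j+1)) =
        ∑ i ∈ Finset.range (j + 2), (Bc q α i (mu q u j) * c q α u j i) •
          psi i (mu q u (j+1)) := by
      rw [Finset.sum_range_succ (n := j+1), c_of_gt q α u j (j+1) (by omega)]
      simp only [mul_zero, zero_smul, add_zero]
      exact Finset.sum_congr rfl fun i _ => by rw [mul_comm]
    have e3 : ∑ i ∈ Finset.range (j + 1), (c q α u j i * Cc q i (mu q u j)) •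
          psi (i + 1) (mu q u (j+1)) =
        ∑ i ∈ Finset.range (j + 2), (if i = 0 then 0 else
          Cc q (i - 1) (mu q u j) * c q α u j (i - 1)) • psi i (mu q u (j+1)) := by
      rw [Finset.sum_range_succ' (n := j+1)]
      simp only [Nat.succ_ne_zero, if_false, eq_self_iff_true, if_true, ite_false, ite_true,
        Nat.add_sub_cancel, zero_smul, add_zero]
      exact Finset.sum_congr rfl fun i _ => by rw [mul_comm]
    rw [e1, e2, e3, ← Finset.sum_add_distrib, ← Finset.sum_add_distrib]
    refine Finset.sum_congr rfl fun i _ => ?_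
    rw [c_succ, add_smul, add_smul]

lemma sum_psi_apply (f : ℕ → ℂ) (n i₀ : ℕ) (ν ν₀ : ℂˣ) :
    (∑ i ∈ Finset.range n, f i • psi i ν) (i₀, ν₀)
      = if i₀ < n ∧ ν = ν₀ then f i₀ else 0 := by
  classical
  rw [Finsupp.finset_sum_apply]
  simp only [Finsupp.smul_apply, psi, Finsupp.single_apply, Prod.mk.injEq, smul_eq_mul,
    mul_ite, mul_one, mul_zero]
  by_cases hv : ν = ν₀
  · subst hv
    simp only [and_true]
    rw [Finset.sum_ite_eq' (Finset.range n) i₀ f]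
    simp only [Finset.mem_range]
  · simp only [hv, and_false, if_false, Finset.sum_const_zero]

lemma v_apply (j i₀ : ℕ) (ν₀ : ℂˣ) :
    v q α u j (i₀, ν₀) = if i₀ < j + 1 ∧ mu q u j = ν₀ then c q α u j i₀ else 0 := by
  rw [v_eq, sum_psi_apply]

end main


section arith
variable {q : ℂˣ} {α : ℂ} {u : ℂˣ} {l : ℕ} {ε : ℂ}

lemma pow_inj (hq' : ∀ k : ℕ, 0 < k → (q : ℂ) ^ k ≠ 1) {a b : ℕ}
    (h : (q : ℂ) ^ a = (q : ℂ) ^ b) : a = b := by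
  by_contra hne
  wlog hab : a < b generalizing a b
  · exact this h.symm (Ne.symm hne) (by omega)
  obtain ⟨d, rfl⟩ : ∃ d, b = a + (d + 1) := ⟨b - a - 1, by omega⟩
  rw [pow_add] at h
  exact hq' (d+1) (by omega)
    (mul_left_cancel₀ (pow_ne_zero a q.ne_zero) (h.symm.trans (mul_one _).symm))

lemma mu_val (j : ℕ) : ((mu q u j : ℂˣ) : ℂ) = (q : ℂ) ^ (2 * j) * (u : ℂ) := by
  rw [mu, Units.val_mul, Units.val_pow_eq_pow_val, Units.val_pow_eq_pow_val, ← pow_mul]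

lemma hu_sq (hε : ε = 1 ∨ ε = -1) (hu : (u : ℂ) = ε * (q : ℂ) ^ (-(l : ℤ))) :
    (u : ℂ) ^ 2 * (q : ℂ) ^ (2 * l) = 1 := by
  have hQ : (q : ℂ) ≠ 0 := q.ne_zero
  have hε2 : ε ^ 2 = 1 := by rcases hε with h | h <;> rw [h] <;> ring
  rw [hu, mul_pow, hε2, one_mul, sq, ← zpow_natCast (q : ℂ) (2 * l), mul_assoc,
    ← zpow_add₀ hQ, ← zpow_add₀ hQ]
  rw [show -(l : ℤ) + (-(l : ℤ) + (2 * l : ℕ)) = 0 by push_cast; ring, zpow_zero]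

lemma mu_sq_eq (hε : ε = 1 ∨ ε = -1) (hu : (u : ℂ) = ε * (q : ℂ) ^ (-(l : ℤ))) (j : ℕ) :
    ((mu q u j : ℂˣ) : ℂ) ^ 2 * (q : ℂ) ^ (2 * l) = (q : ℂ) ^ (4 * j) := by
  rw [mu_val, mul_pow, ← pow_mul, mul_assoc, hu_sq hε hu, mul_one]
  ring_nf

lemma Cc_mu_zero_iff (hq' : ∀ k : ℕ, 0 < k → (q : ℂ) ^ k ≠ 1)
    (hε : ε = 1 ∨ ε = -1) (hu : (u : ℂ) = ε * (q : ℂ) ^ (-(l : ℤ))) (i j : ℕ) :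
    Cc q i (mu q u j) = 0 ↔ 2 * i + 2 * l = 4 * j := by
  have hQ : (q : ℂ) ≠ 0 := q.ne_zero
  have key : (q : ℂ) ^ (2 * i) - ((mu q u j : ℂˣ) : ℂ) ^ 2 = 0 ↔ 2 * i + 2 * l = 4 * j := by
    rw [sub_eq_zero]
    constructor
    · intro h
      apply pow_inj hq'
      rw [pow_add, h, mu_sq_eq hε hu]
    · intro h
      have h2 : (q : ℂ) ^ (2 * i + 2 * l) = (q : ℂ) ^ (4 * j) := by rw [h]
      rw [pow_add, ← mu_sq_eq hε hu j] at h2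
      exact mul_right_cancel₀ (pow_ne_zero _ hQ) h2
  rw [Cc, mul_eq_zero]
  constructor
  · rintro (h | h)
    · exact absurd h (pow_ne_zero _ hQ)
    · exact key.mp h
  · intro h; exact Or.inr (key.mpr h)

lemma mu_inj (hq' : ∀ k : ℕ, 0 < k → (q : ℂ) ^ k ≠ 1) {j j' : ℕ}
    (h : mu q u j = mu q u j') : j = j' := by
  have : (q : ℂ) ^ (2 * j) * (u : ℂ) = (q : ℂ) ^ (2 * j') * (u : ℂ) := by
    rw [← mu_val, ← mu_val, h]
  have h2 := mul_right_cancel₀ u.ne_zero this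
  have := pow_inj hq' h2
  omega

lemma c_diag_succ (j : ℕ) :
    c q α u (j + 1) (j + 1) = Cc q j (mu q u j) * c q α u j j := by
  rw [c_succ, c_of_gt q α u j (j + 2) (by omega), c_of_gt q α u j (j + 1) (by omega)]
  simp

lemma c_diag_ne (hq' : ∀ k : ℕ, 0 < k → (q : ℂ) ^ k ≠ 1)
    (hε : ε = 1 ∨ ε = -1) (hu : (u : ℂ) = ε * (q : ℂ) ^ (-(l : ℤ))) :
    ∀ j, j ≤ l → c q α u j j ≠ 0 := by
  intro j
  induction j with
  | zero => intro _; rw [c_zero_eq]; simp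
  | succ j ih =>
    intro hj
    rw [c_diag_succ]
    exact mul_ne_zero (fun h => by have := (Cc_mu_zero_iff hq' hε hu j j).mp h; omega)
      (ih (by omega))

lemma c_top_zero (hε : ε = 1 ∨ ε = -1) (hu : (u : ℂ) = ε * (q : ℂ) ^ (-(l : ℤ))) :
    c q α u (l + 1) (l + 1) = 0 := by
  rw [c_diag_succ, Cc, show ((mu q u l : ℂˣ) : ℂ) ^ 2 = (q : ℂ) ^ (2 * l) from ?_, sub_self,
    mul_zero, zero_mul]
  have h := mu_sq_eq hε hu l
  have hQ : (q : ℂ) ≠ 0 := q.ne_zero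
  have : (q : ℂ) ^ (4 * l) = (q : ℂ) ^ (2 * l) * (q : ℂ) ^ (2 * l) := by
    rw [← pow_add]; ring_nf
  rw [this] at h
  exact mul_right_cancel₀ (pow_ne_zero _ hQ) h

lemma escape (hq' : ∀ k : ℕ, 0 < k → (q : ℂ) ^ k ≠ 1)
    (hε : ε = 1 ∨ ε = -1) (hu : (u : ℂ) = ε * (q : ℂ) ^ (-(l : ℤ)))
    {i₀ : ℕ} (hi₀ : i₀ ≤ l) (h1 : c q α u (l + 1) i₀ ≠ 0)
    (h2 : ∀ i, i₀ < i → c q α u (l + 1) i = 0) :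
    ∀ k, c q α u (l + 1 + k) (i₀ + k) ≠ 0 ∧ ∀ i, i₀ + k < i → c q α u (l + 1 + k) i = 0 := by
  intro k
  induction k with
  | zero => exact ⟨h1, fun i hi => h2 i (by omega)⟩
  | succ k ih =>
    obtain ⟨ihne, ihz⟩ := ih
    have hz : ∀ i, i₀ + (k + 1) < i → c q α u (l + 1 + (k + 1)) i = 0 := by
      intro i hi
      rw [show l + 1 + (k + 1) = (l + 1 + k) + 1 by omega, c_succ,
        ihz (i + 1) (by omega), ihz i (by omega), mul_zero, mul_zero]
      rcases Nat.eq_zero_or_pos i with h0 | h0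
      · omega
      · rw [if_neg (by omega), ihz (i - 1) (by omega), mul_zero]; ring
    refine ⟨?_, hz⟩
    rw [show l + 1 + (k + 1) = (l + 1 + k) + 1 by omega, c_succ,
      ihz (i₀ + (k + 1) + 1) (by omega), ihz (i₀ + (k + 1)) (by omega), mul_zero, mul_zero,
      if_neg (by omega), show i₀ + (k + 1) - 1 = i₀ + k by omega]
    simp only [zero_add]
    refine mul_ne_zero (fun h => ?_) ihne
    have := (Cc_mu_zero_iff hq' hε hu (i₀ + k) (l + 1 + k)).mp h
    omega

end arith


section actions
variable {q : ℂˣ} {α : ℂ} {u : ℂˣ} {l : ℕ} {ε : ℂ}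

lemma v_ne_zero (hq' : ∀ k : ℕ, 0 < k → (q : ℂ) ^ k ≠ 1)
    (hε : ε = 1 ∨ ε = -1) (hu : (u : ℂ) = ε * (q : ℂ) ^ (-(l : ℤ)))
    (j : ℕ) (hj : j ≤ l) : v q α u j ≠ 0 := by
  intro h
  have h2 : c q α u j j = 0 := by
    have h3 := v_apply q α u j j (mu q u j)
    rw [h, if_pos ⟨Nat.lt_succ_self j, rfl⟩] at h3
    simpa using h3.symm
  exact c_diag_ne hq' hε hu j hj h2

lemma v_top_zero (hq' : ∀ k : ℕ, 0 < k → (q : ℂ) ^ k ≠ 1)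
    (hε : ε = 1 ∨ ε = -1) (hu : (u : ℂ) = ε * (q : ℂ) ^ (-(l : ℤ)))
    (hN : ∃ m : ℕ, 0 < m ∧ v q α u m = 0) : v q α u (l + 1) = 0 := by
  classical
  by_contra hne
  have hex : ∃ i, c q α u (l + 1) i ≠ 0 := by
    by_contra hall
    push_neg at hall
    exact hne (by rw [v_eq]; exact Finset.sum_eq_zero fun i _ => by rw [hall i, zero_smul])
  obtain ⟨i1, hi1⟩ := hex
  have hi1le : i1 ≤ l + 1 := by
    by_contra hgt; exact hi1 (c_of_gt q α u (l + 1) i1 (by omega))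
  set P := fun i => c q α u (l + 1) i ≠ 0 with hP
  set i₀ := Nat.findGreatest P (l + 1) with hdef
  have hPi₀ : P i₀ := Nat.findGreatest_spec hi1le hi1
  have hmax : ∀ i, i₀ < i → c q α u (l + 1) i = 0 := by
    intro i hi
    by_cases hile : i ≤ l + 1
    · by_contra hne2
      exact Nat.findGreatest_is_greatest hi hile hne2
    · exact c_of_gt q α u (l + 1) i (by omega)
  have hi₀l : i₀ ≤ l := by
    have hle : i₀ ≤ l + 1 := Nat.findGreatest_le _
    rcases Nat.lt_or_ge i₀ (l + 1) with h | h
    · omega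
    · have heq : i₀ = l + 1 := by omega
      rw [heq] at hPi₀
      exact absurd (c_top_zero hε hu) hPi₀
  obtain ⟨m, hm, hvm⟩ := hN
  have hml : l + 1 ≤ m := by
    by_contra hlt
    apply v_ne_zero hq' hε hu l le_rfl
    have hcomp : v q α u l = ((phi q α : Module.End ℂ Wsp) ^ (l - m)) (v q α u m) := by
      rw [v, v, ← Module.End.mul_apply, ← pow_add, show l - m + m = l by omega]
    rw [hcomp, hvm, map_zero]
  have hesc := (escape hq' hε hu hi₀l hPi₀ hmax (m - (l + 1))).1
  rw [show l + 1 + (m - (l + 1)) = m by omega] at hesc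
  apply hesc
  have happ := v_apply q α u m (i₀ + (m - (l + 1))) (mu q u m)
  rw [hvm, if_pos ⟨by omega, rfl⟩] at happ
  simpa using happ.symm

lemma kappa_v (j : ℕ) :
    kappa (v q α u j) = ((mu q u j : ℂˣ) : ℂ) • v q α u j := by
  rw [v_eq, map_sum, Finset.smul_sum]
  refine Finset.sum_congr rfl fun i _ => ?_
  rw [map_smul, kappa_psi, smul_smul, smul_smul, mul_comm]

lemma kappaInv_v (j : ℕ) :
    kappaInv (v q α u j) = (((mu q u j : ℂˣ) : ℂ))⁻¹ • v q α u j := by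
  rw [v_eq, map_sum, Finset.smul_sum]
  refine Finset.sum_congr rfl fun i _ => ?_
  rw [map_smul, kappaInv_psi, smul_smul, smul_smul, mul_comm]

/-- the scalars `φ'(v j) = sc j • v (j-1)` -/
def sc (q : ℂˣ) (u : ℂˣ) : ℕ → ℂ
  | 0 => 0
  | j+1 => sc q u j +
      ((q : ℂ) - (q : ℂ)⁻¹)⁻¹ * ((((mu q u j : ℂˣ) : ℂ))⁻¹ - ((mu q u j : ℂˣ) : ℂ))

lemma sc_zero : sc q u 0 = 0 := by rw [sc]

lemma sc_succ (j : ℕ) : sc q u (j + 1) = sc q u j +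
    ((q : ℂ) - (q : ℂ)⁻¹)⁻¹ * ((((mu q u j : ℂˣ) : ℂ))⁻¹ - ((mu q u j : ℂˣ) : ℂ)) := by
  rw [sc]

lemma phi'_v (hq' : ∀ k : ℕ, 0 < k → (q : ℂ) ^ k ≠ 1) :
    ∀ j : ℕ, phi' q (v q α u j) = sc q u j • v q α u (j - 1) := by
  intro j
  induction j with
  | zero => rw [v_zero, phi'_psi_zero, sc_zero, zero_smul]
  | succ j ih =>
    rw [v_succ, comm_apply hq', ih, map_smul, kappa_v, kappaInv_v, Nat.add_sub_cancel]
    cases j with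
    | zero =>
      rw [sc_zero, zero_smul, sc_succ 0, sc_zero]
      module
    | succ j' =>
      rw [Nat.add_sub_cancel, ← v_succ, sc_succ (j' + 1)]
      module

lemma eps_inv (hε : ε = 1 ∨ ε = -1) : ε⁻¹ = ε := by
  rcases hε with h | h <;> rw [h] <;> norm_num

lemma sc_closed (hq' : ∀ k : ℕ, 0 < k → (q : ℂ) ^ k ≠ 1)
    (hε : ε = 1 ∨ ε = -1) (hu : (u : ℂ) = ε * (q : ℂ) ^ (-(l : ℤ))) :
    ∀ j : ℕ, sc q u j = ε * (((q : ℂ) - (q : ℂ)⁻¹)⁻¹) ^ 2 *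
      ((q : ℂ) ^ j - ((q : ℂ) ^ j)⁻¹) *
      ((q : ℂ) ^ (l + 1) * ((q : ℂ) ^ j)⁻¹ - (q : ℂ) ^ j * ((q : ℂ) ^ (l + 1))⁻¹) := by
  have hQ : (q : ℂ) ≠ 0 := q.ne_zero
  have hww := hw hq'
  intro j
  induction j with
  | zero => rw [sc_zero]; simp
  | succ j ih =>
    have hmu : ((mu q u j : ℂˣ) : ℂ) = ε * ((q : ℂ) ^ j) ^ 2 * ((q : ℂ) ^ l)⁻¹ := by
      rw [mu_val, hu, zpow_neg, zpow_natCast, show 2 * j = j * 2 by ring, pow_mul]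
      ring
    have hmuinv : (((mu q u j : ℂˣ) : ℂ))⁻¹ = ε * (((q : ℂ) ^ j)⁻¹) ^ 2 * (q : ℂ) ^ l := by
      rw [hmu, mul_inv, mul_inv, inv_inv, eps_inv hε, inv_pow]
      try ring
    rw [sc_succ, ih, hmuinv, hmu]
    simp only [pow_succ, mul_inv]
    generalize hW : ((q : ℂ) - (q : ℂ)⁻¹)⁻¹ = W
    generalize hY : (((q : ℂ)) ^ j)⁻¹ = Y
    generalize hX : ((q : ℂ)) ^ j = X
    generalize hG : (((q : ℂ)) ^ l)⁻¹ = G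
    generalize hB : ((q : ℂ)) ^ l = B
    generalize hR : ((q : ℂ))⁻¹ = R
    have r1 : (q : ℂ) * R = 1 := by rw [← hR]; exact mul_inv_cancel₀ hQ
    have r3 : X * Y = 1 := by rw [← hX, ← hY]; exact mul_inv_cancel₀ (pow_ne_zero _ hQ)
    have r6 : B * G = 1 := by rw [← hB, ← hG]; exact mul_inv_cancel₀ (pow_ne_zero _ hQ)
    have r4 : ((q : ℂ) - R) * W = 1 := by rw [← hR, ← hW]; exact mul_inv_cancel₀ hww
    linear_combination (-(W^2*ε*(-1*R*Y^2*B + R*X*Y*G + (q:ℂ)*X*Y*B - 1*(q:ℂ)*X^2*G))) * r1 +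
      (-(W*ε*(Y^2*B - 1*X^2*G))) * r4

lemma sc_ne_zero (hq' : ∀ k : ℕ, 0 < k → (q : ℂ) ^ k ≠ 1)
    (hε : ε = 1 ∨ ε = -1) (hu : (u : ℂ) = ε * (q : ℂ) ^ (-(l : ℤ)))
    (j : ℕ) (hj1 : 1 ≤ j) (hjl : j ≤ l) : sc q u j ≠ 0 := by
  have hQ : (q : ℂ) ≠ 0 := q.ne_zero
  have hww := hw hq'
  have hXne : ((q : ℂ) ^ j) ≠ 0 := pow_ne_zero _ hQ
  have hBne : ((q : ℂ) ^ (l + 1)) ≠ 0 := pow_ne_zero _ hQ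
  rw [sc_closed hq' hε hu]
  have hεne : ε ≠ 0 := by rcases hε with h | h <;> rw [h] <;> norm_num
  refine mul_ne_zero (mul_ne_zero (mul_ne_zero hεne (pow_ne_zero _ (inv_ne_zero hww))) ?_) ?_
  · intro h
    have h4 := sub_eq_zero.mp h
    field_simp at h4
    have h5 : (q : ℂ) ^ (j + j) = (q : ℂ) ^ 0 := by
      rw [pow_add, pow_zero]; linear_combination h4
    have := pow_inj hq' h5
    omega
  · intro h
    have h4 := sub_eq_zero.mp h
    field_simp at h4
    have h5 : (q : ℂ) ^ (l + 1 + (l + 1)) = (q : ℂ) ^ (j + j) := by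
      rw [pow_add, pow_add]; linear_combination h4
    have := pow_inj hq' h5
    omega

end actions

end S16

/-- For `λ = ε·q^(−l) ∈ N` (`ε = ±1`): `φ'(ψ(0,λ)) = 0`; `φ^(l+1)(ψ(0,λ)) = 0` and
`φ^l(ψ(0,λ)) ≠ 0`; the span `V_λ` of `φ^j(ψ(0,λ))`, `0 ≤ j ≤ l`, has dimension `l+1`, is
invariant under `φ, φ', κ`, and is simple. -/
theorem stmt16 (q : ℂˣ) (hq' : ∀ k : ℕ, 0 < k → (q : ℂ) ^ k ≠ 1)
    (p α : ℂ) (hp : p ^ 2 = (q : ℂ))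
    (hα : α = 0 ∨ (α ≠ 0 ∧ ∀ j : ℕ,
      α ^ 2 * ((q : ℂ) - (q : ℂ)⁻¹) ^ 2 ≠ -(p ^ (j : ℤ) + p ^ (-(j : ℤ))) ^ 2))
    (l : ℕ) (ε : ℂ) (hε : ε = 1 ∨ ε = -1)
    (u : ℂˣ) (hu : (u : ℂ) = ε * (q : ℂ) ^ (-(l : ℤ)))
    (hN : ∃ m : ℕ, 0 < m ∧ ((phi q α : Module.End ℂ Wsp) ^ m) (psi 0 u) = 0) :
    phi' q (psi 0 u) = 0 ∧
    ((phi q α : Module.End ℂ Wsp) ^ (l + 1)) (psi 0 u) = 0 ∧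
    ((phi q α : Module.End ℂ Wsp) ^ l) (psi 0 u) ≠ 0 ∧
    (let Vl : Submodule ℂ Wsp := Submodule.span ℂ
      {x : Wsp | ∃ j : ℕ, j ≤ l ∧ x = ((phi q α : Module.End ℂ Wsp) ^ j) (psi 0 u)}
    Module.finrank ℂ Vl = l + 1 ∧
    (∀ x ∈ Vl, phi q α x ∈ Vl) ∧ (∀ x ∈ Vl, phi' q x ∈ Vl) ∧ (∀ x ∈ Vl, kappa x ∈ Vl) ∧
    ∀ U : Submodule ℂ Wsp, U ≤ Vl →
      (∀ x ∈ U, phi q α x ∈ U) → (∀ x ∈ U, phi' q x ∈ U) → (∀ x ∈ U, kappa x ∈ U) →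
      U = ⊥ ∨ U = Vl) := by
  classical
  have hNv : ∃ m : ℕ, 0 < m ∧ S16.v q α u m = 0 := hN
  have hvtop : S16.v q α u (l + 1) = 0 := S16.v_top_zero hq' hε hu hNv
  have hvl : S16.v q α u l ≠ 0 := S16.v_ne_zero hq' hε hu l le_rfl
  have hvzero : ∀ k : ℕ, S16.v q α u (l + 1 + k) = 0 := by
    intro k
    induction k with
    | zero => exact hvtop
    | succ k ih =>
      rw [show l + 1 + (k + 1) = (l + 1 + k) + 1 by omega, S16.v_succ, ih, map_zero]
  have hv_all : ∀ j : ℕ, l < j → S16.v q α u j = 0 := by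
    intro j hj
    have := hvzero (j - (l + 1))
    rwa [show l + 1 + (j - (l + 1)) = j by omega] at this
  refine ⟨S16.phi'_psi_zero q u, hvtop, hvl, ?_⟩
  intro Vl
  set S : Set Wsp :=
    {x : Wsp | ∃ j : ℕ, j ≤ l ∧ x = ((phi q α : Module.End ℂ Wsp) ^ j) (psi 0 u)} with hS
  have hVlS : Vl = Submodule.span ℂ S := rfl
  set b : Fin (l + 1) → Wsp := fun j => S16.v q α u (j : ℕ) with hb
  have hSb : S = Set.range b := by
    ext x
    constructor
    · rintro ⟨j, hj, rfl⟩
      exact ⟨⟨j, by omega⟩, rfl⟩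
    · rintro ⟨i, rfl⟩
      exact ⟨(i : ℕ), by omega, rfl⟩
  have hVeq : Vl = Submodule.span ℂ (Set.range b) := by rw [hVlS, hSb]
  -- linear independence
  have hind : LinearIndependent ℂ b := by
    rw [Fintype.linearIndependent_iff]
    intro g hg i
    have happ := congrArg (fun z : Wsp => z ((i : ℕ), S16.mu q u (i : ℕ))) hg
    simp only [Finsupp.coe_zero, Pi.zero_apply] at happ
    rw [Finsupp.finset_sum_apply] at happ
    have hterm : ∀ j : Fin (l + 1), (g j • b j) ((i : ℕ), S16.mu q u (i : ℕ)) =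
        if j = i then g j * S16.c q α u (i : ℕ) (i : ℕ) else 0 := by
      intro j
      rw [Finsupp.smul_apply, hb]
      rw [S16.v_apply]
      by_cases hji : j = i
      · subst hji
        rw [if_pos ⟨Nat.lt_succ_self _, rfl⟩, if_pos rfl, smul_eq_mul]
      · rw [if_neg, if_neg hji, smul_zero]
        rintro ⟨-, hmu⟩
        exact hji (Fin.ext (S16.mu_inj hq' hmu))
    rw [Finset.sum_congr rfl (fun j _ => hterm j),
      Finset.sum_ite_eq' Finset.univ i _, if_pos (Finset.mem_univ i)] at happ
    rcases mul_eq_zero.mp happ with h | h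
    · exact h
    · exact absurd h (S16.c_diag_ne hq' hε hu (i : ℕ) (by omega))
  have hmemS : ∀ j : ℕ, j ≤ l → S16.v q α u j ∈ Vl := by
    intro j hj
    rw [hVlS]
    exact Submodule.subset_span ⟨j, hj, rfl⟩
  have hv_any : ∀ j : ℕ, S16.v q α u j ∈ Vl := by
    intro j
    rcases le_or_gt j l with h | h
    · exact hmemS j h
    · rw [hv_all j h]; exact Submodule.zero_mem _
  constructor
  · -- finrank
    rw [hVeq]
    rw [finrank_span_eq_card hind, Fintype.card_fin]
  refine ⟨?_, ?_, ?_, ?_⟩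
  · -- phi invariance
    intro x hx
    have hmap : Submodule.map (phi q α) Vl ≤ Vl := by
      rw [hVlS, Submodule.map_span]
      apply Submodule.span_le.mpr
      rintro y ⟨x', ⟨j, hj, rfl⟩, rfl⟩
      rw [show phi q α (((phi q α : Module.End ℂ Wsp) ^ j) (psi 0 u)) = S16.v q α u (j + 1)
        from (S16.v_succ q α u j).symm]
      exact hv_any (j + 1)
    exact hmap ⟨x, hx, rfl⟩
  · -- phi' invariance
    intro x hx
    have hmap : Submodule.map (phi' q) Vl ≤ Vl := by
      rw [hVlS, Submodule.map_span]
      apply Submodule.span_le.mpr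
      rintro y ⟨x', ⟨j, hj, rfl⟩, rfl⟩
      rw [show phi' q (((phi q α : Module.End ℂ Wsp) ^ j) (psi 0 u)) =
        S16.sc q u j • S16.v q α u (j - 1) from S16.phi'_v hq' j]
      exact Submodule.smul_mem _ _ (hv_any (j - 1))
    exact hmap ⟨x, hx, rfl⟩
  · -- kappa invariance
    intro x hx
    have hmap : Submodule.map kappa Vl ≤ Vl := by
      rw [hVlS, Submodule.map_span]
      apply Submodule.span_le.mpr
      rintro y ⟨x', ⟨j, hj, rfl⟩, rfl⟩
      rw [show kappa (((phi q α : Module.End ℂ Wsp) ^ j) (psi 0 u)) =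
        ((S16.mu q u j : ℂˣ) : ℂ) • S16.v q α u j from S16.kappa_v j]
      exact Submodule.smul_mem _ _ (hv_any j)
    exact hmap ⟨x, hx, rfl⟩
  · -- simplicity
    intro U hUle hUphi hUphi' hUkappa
    by_cases hbot : U = ⊥
    · exact Or.inl hbot
    right
    obtain ⟨x, hxU, hxne⟩ := Submodule.ne_bot_iff U |>.mp hbot
    have hxV : x ∈ Submodule.span ℂ (Set.range b) := by rw [← hVeq]; exact hUle hxU
    obtain ⟨t, ht⟩ := (Submodule.mem_span_range_iff_exists_fun ℂ).mp hxV
    have hex : ∃ i, t i ≠ 0 := by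
      by_contra hall
      push_neg at hall
      apply hxne
      rw [← ht]
      exact Finset.sum_eq_zero fun i _ => by rw [hall, zero_smul]
    obtain ⟨i₀, hi₀⟩ := hex
    -- from any combination in U with nonzero coefficient, v j₀ ∈ U
    have hvU : ∀ n : ℕ, ∀ t : Fin (l + 1) → ℂ,
        (Finset.univ.filter (fun j => t j ≠ 0)).card ≤ n →
        (∑ j, t j • b j) ∈ U → ∀ j₀, t j₀ ≠ 0 → b j₀ ∈ U := by
      intro n
      induction n with
      | zero =>
        intro t hcard _ j₀ hj₀
        exfalso
        have : j₀ ∈ Finset.univ.filter (fun j => t j ≠ 0) := by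
          simp [hj₀]
        have := Finset.card_pos.mpr ⟨j₀, this⟩
        omega
      | succ n ih =>
        intro t hcard hmem j₀ hj₀
        by_cases hone : ∀ j, j ≠ j₀ → t j = 0
        · have hxeq : ∑ j, t j • b j = t j₀ • b j₀ :=
            Finset.sum_eq_single j₀ (fun j _ hj => by rw [hone j hj, zero_smul])
              (fun h => absurd (Finset.mem_univ j₀) h)
          have hbj : b j₀ = (t j₀)⁻¹ • (t j₀ • b j₀) := by
            rw [smul_smul, inv_mul_cancel₀ hj₀, one_smul]
          rw [hbj, ← hxeq]
          exact Submodule.smul_mem _ _ hmem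
        · push_neg at hone
          obtain ⟨j₁, hj₁ne, hj₁⟩ := hone
          set t' : Fin (l + 1) → ℂ := fun j =>
            (((S16.mu q u (j : ℕ) : ℂˣ) : ℂ) - ((S16.mu q u (j₁ : ℕ) : ℂˣ) : ℂ)) * t j
            with ht'
          have hy : (∑ j, t' j • b j) ∈ U := by
            have heq : ∑ j, t' j • b j = kappa (∑ j, t j • b j) -
                ((S16.mu q u (j₁ : ℕ) : ℂˣ) : ℂ) • (∑ j, t j • b j) := by
              rw [map_sum, Finset.smul_sum, ← Finset.sum_sub_distrib]
              refine Finset.sum_congr rfl fun j _ => ?_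
              simp only [hb, ht', map_smul, S16.kappa_v, smul_smul, ← sub_smul]
              congr 1
              ring
            rw [heq]
            exact Submodule.sub_mem _ (hUkappa _ hmem) (Submodule.smul_mem _ _ hmem)
          have hmune : ∀ j : Fin (l + 1), j ≠ j₁ →
              ((S16.mu q u (j : ℕ) : ℂˣ) : ℂ) - ((S16.mu q u (j₁ : ℕ) : ℂˣ) : ℂ) ≠ 0 := by
            intro j hj h
            apply hj
            apply Fin.ext
            apply S16.mu_inj hq'
            exact Units.ext (sub_eq_zero.mp h)
          have hsub : (Finset.univ.filter (fun j => t' j ≠ 0)) ⊆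
              (Finset.univ.filter (fun j => t j ≠ 0)).erase j₁ := by
            intro j hj
            simp only [Finset.mem_filter, Finset.mem_univ, true_and, ht'] at hj
            rw [Finset.mem_erase, Finset.mem_filter]
            refine ⟨?_, Finset.mem_univ j, fun h => hj (by rw [h, mul_zero])⟩
            intro hjj₁
            subst hjj₁
            exact hj (by rw [sub_self, zero_mul])
          have hj₁mem : j₁ ∈ Finset.univ.filter (fun j => t j ≠ 0) := by simp [hj₁]
          have hcard' : (Finset.univ.filter (fun j => t' j ≠ 0)).card ≤ n := by
            have h1 := Finset.card_le_card hsub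
            rw [Finset.card_erase_of_mem hj₁mem] at h1
            omega
          have ht'j₀ : t' j₀ ≠ 0 :=
            mul_ne_zero (hmune j₀ (Ne.symm hj₁ne)) hj₀
          exact ih t' hcard' hy j₀ ht'j₀
    have hbj₀ : b i₀ ∈ U := hvU _ t le_rfl (ht ▸ hxU) i₀ hi₀
    have hdown : ∀ j : ℕ, j ≤ l → S16.v q α u j ∈ U → S16.v q α u 0 ∈ U := by
      intro j
      induction j with
      | zero => exact fun _ h => h
      | succ j ih =>
        intro hj h
        have h1 : phi' q (S16.v q α u (j + 1)) ∈ U := hUphi' _ h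
        rw [S16.phi'_v hq', Nat.add_sub_cancel] at h1
        have hsne := S16.sc_ne_zero hq' hε hu (j + 1) (by omega) (by omega)
        have h2 : S16.v q α u j ∈ U := by
          have h3 := Submodule.smul_mem U (S16.sc q u (j + 1))⁻¹ h1
          rwa [smul_smul, inv_mul_cancel₀ hsne, one_smul] at h3
        exact ih (by omega) h2
    have hv0 : S16.v q α u 0 ∈ U := hdown (i₀ : ℕ) (by omega) hbj₀
    have hup : ∀ j : ℕ, j ≤ l → S16.v q α u j ∈ U := by
      intro j
      induction j with
      | zero => exact fun _ => hv0
      | succ j ih =>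
        intro hj
        rw [S16.v_succ]
        exact hUphi _ (ih (by omega))
    refine le_antisymm hUle ?_
    rw [hVlS]
    apply Submodule.span_le.mpr
    rintro y ⟨j, hj, rfl⟩
    exact hup j hj

end
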